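/- arXiv:0809.2378 — 4 statements merged into one kernel-verified Lean document; each statement's English description precedes it below -/
import Mathlib

section
/- Let v_1,...,v_k ∈ (ZMod 2)^k be nonzero vectors and define f : (ZMod 2)^k × (ZMod 2)^{n−k} → ZMod 2 by f(x,y) = 1 iff x ∈ {v_1,...,v_k}. If g : (ZMod 2)^n → ZMod 2 differs from f on fewer than a 2^{−k} fraction of inputs, then there exists a linear map L : (ZMod 2)^k → (ZMod 2)^n such that g(L(v_i)) = 1 for all i ∈ [k]. Consequently, f is 2^{−k}-far from being M-free, where M is the matroid represented by v_1,...,v_k. -/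
open Finset

/-- `h` is `M`-free for the matroid represented by `v` if no linear map `L`
makes `h` equal to `1` on all the points `L (v i)`. -/
def MatroidFree {k : ℕ} {D : Type*} [AddCommGroup D] [Module (ZMod 2) D]
    (v : Fin k → (Fin k → ZMod 2)) (h : D → ZMod 2) : Prop :=
  ∀ L : (Fin k → ZMod 2) →ₗ[ZMod 2] D, ¬ (∀ i, h (L (v i)) = 1)

noncomputable instance linearMapFintypeAux (k m : ℕ) :
    Fintype ((Fin k → ZMod 2) →ₗ[ZMod 2] (Fin m → ZMod 2)) :=
  Fintype.ofInjective
    (fun B => (B : (Fin k → ZMod 2) → (Fin m → ZMod 2))) DFunLike.coe_injective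

lemma fiber_card_mul {k m : ℕ} (x : Fin k → ZMod 2) (hx : x ≠ 0) (y : Fin m → ZMod 2) :
    (Finset.univ.filter
        (fun B : (Fin k → ZMod 2) →ₗ[ZMod 2] (Fin m → ZMod 2) => B x = y)).card * 2 ^ m
      = Fintype.card ((Fin k → ZMod 2) →ₗ[ZMod 2] (Fin m → ZMod 2)) := by
  classical
  obtain ⟨i, hi⟩ : ∃ i, x i ≠ 0 := by
    by_contra hc; push_neg at hc; exact hx (funext hc)
  have hxi : x i = 1 := by
    have h2 : ∀ a : ZMod 2, a ≠ 0 → a = 1 := by decide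
    exact h2 _ hi
  set C : (Fin m → ZMod 2) → ((Fin k → ZMod 2) →ₗ[ZMod 2] (Fin m → ZMod 2)) :=
    fun z => (LinearMap.proj i).smulRight z with hC
  have hCx : ∀ z, (C z) x = z := by
    intro z; simp [hC, hxi]
  have hCadd : ∀ a b : Fin m → ZMod 2, C a + C b = C (a + b) := by
    intro a b; ext w; simp [hC, smul_add]
  have hCzero : C 0 = 0 := by ext w; simp [hC]
  have equi : ∀ y' : Fin m → ZMod 2,
      (Finset.univ.filter (fun B : (Fin k → ZMod 2) →ₗ[ZMod 2] (Fin m → ZMod 2) =>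
        B x = y')).card
        = (Finset.univ.filter (fun B : (Fin k → ZMod 2) →ₗ[ZMod 2] (Fin m → ZMod 2) =>
        B x = y)).card := by
    intro y'
    apply Finset.card_bij' (fun B _ => B + C (y - y')) (fun B _ => B + C (y' - y))
    · intro B hB
      simp only [Finset.mem_filter, Finset.mem_univ, true_and] at hB ⊢
      rw [LinearMap.add_apply, hB, hCx]
      abel
    · intro B hB
      simp only [Finset.mem_filter, Finset.mem_univ, true_and] at hB ⊢
      rw [LinearMap.add_apply, hB, hCx]
      abel
    · intro B _
      rw [add_assoc, hCadd, sub_add_sub_cancel, sub_self, hCzero, add_zero]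
    · intro B _
      rw [add_assoc, hCadd, sub_add_sub_cancel, sub_self, hCzero, add_zero]
  have hcardW : Fintype.card (Fin m → ZMod 2) = 2 ^ m := by simp
  have hsum : Fintype.card ((Fin k → ZMod 2) →ₗ[ZMod 2] (Fin m → ZMod 2))
      = ∑ y' : Fin m → ZMod 2,
        (Finset.univ.filter (fun B : (Fin k → ZMod 2) →ₗ[ZMod 2] (Fin m → ZMod 2) =>
          B x = y')).card := by
    rw [← Finset.card_univ]
    exact Finset.card_eq_sum_card_fiberwise (fun B _ => Finset.mem_univ (B x))
  rw [hsum, Finset.sum_congr rfl (fun y' _ => equi y'), Finset.sum_const, smul_eq_mul,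
    Finset.card_univ, hcardW, mul_comm]

/-- The canonical function of a matroid is `2^{-k}`-far from being `M`-free:
any `g` disagreeing with it on fewer than a `2^{-k}` fraction of points
contains `M` at some linear map, and hence any `M`-free function is at
distance at least `2^{-k}` from it. -/
theorem canonical_function_far {k m : ℕ}
    (v : Fin k → (Fin k → ZMod 2)) (hv : ∀ i, v i ≠ 0)
    (f : (Fin k → ZMod 2) × (Fin m → ZMod 2) → ZMod 2)
    (hf : ∀ p, f p = if ∃ i, p.1 = v i then 1 else 0) :
    (∀ g : (Fin k → ZMod 2) × (Fin m → ZMod 2) → ZMod 2,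
      (Finset.univ.filter (fun p => g p ≠ f p)).card < 2 ^ m →
      ∃ L : (Fin k → ZMod 2) →ₗ[ZMod 2]
          ((Fin k → ZMod 2) × (Fin m → ZMod 2)),
        ∀ i, g (L (v i)) = 1) ∧
    (∀ h : (Fin k → ZMod 2) × (Fin m → ZMod 2) → ZMod 2,
      MatroidFree v h →
      2 ^ m ≤ (Finset.univ.filter (fun p => h p ≠ f p)).card) := by
  classical
  have main : ∀ g : (Fin k → ZMod 2) × (Fin m → ZMod 2) → ZMod 2,
      (Finset.univ.filter (fun p => g p ≠ f p)).card < 2 ^ m →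
      ∃ L : (Fin k → ZMod 2) →ₗ[ZMod 2]
          ((Fin k → ZMod 2) × (Fin m → ZMod 2)),
        ∀ i, g (L (v i)) = 1 := by
    intro g hg
    set D := Finset.univ.filter
      (fun p : (Fin k → ZMod 2) × (Fin m → ZMod 2) => g p ≠ f p) with hD
    set T := Finset.univ.filter
      (fun B : (Fin k → ZMod 2) →ₗ[ZMod 2] (Fin m → ZMod 2) =>
        ∃ i, (v i, B (v i)) ∈ D) with hT
    have hcardM : 0 < Fintype.card ((Fin k → ZMod 2) →ₗ[ZMod 2] (Fin m → ZMod 2)) :=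
      Fintype.card_pos
    have hTcard : T.card < Fintype.card ((Fin k → ZMod 2) →ₗ[ZMod 2] (Fin m → ZMod 2)) := by
      set D' := D.filter (fun p => p.1 ≠ 0) with hD'
      have hsub : T ⊆ D'.biUnion (fun p => Finset.univ.filter
          (fun B : (Fin k → ZMod 2) →ₗ[ZMod 2] (Fin m → ZMod 2) => B p.1 = p.2)) := by
        intro B hB
        simp only [hT, Finset.mem_filter, Finset.mem_univ, true_and] at hB
        obtain ⟨i, hi⟩ := hB
        refine Finset.mem_biUnion.2 ⟨(v i, B (v i)), ?_, ?_⟩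
        · exact Finset.mem_filter.2 ⟨hi, hv i⟩
        · simp
      have h1 : T.card ≤ ∑ p ∈ D', (Finset.univ.filter
          (fun B : (Fin k → ZMod 2) →ₗ[ZMod 2] (Fin m → ZMod 2) => B p.1 = p.2)).card :=
        le_trans (Finset.card_le_card hsub) (Finset.card_biUnion_le)
      have h2 : T.card * 2 ^ m
          ≤ D'.card * Fintype.card ((Fin k → ZMod 2) →ₗ[ZMod 2] (Fin m → ZMod 2)) := by
        calc T.card * 2 ^ m
            ≤ (∑ p ∈ D', (Finset.univ.filter
              (fun B : (Fin k → ZMod 2) →ₗ[ZMod 2] (Fin m → ZMod 2) =>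
                B p.1 = p.2)).card) * 2 ^ m := Nat.mul_le_mul_right _ h1
          _ = ∑ p ∈ D', (Finset.univ.filter
              (fun B : (Fin k → ZMod 2) →ₗ[ZMod 2] (Fin m → ZMod 2) =>
                B p.1 = p.2)).card * 2 ^ m := Finset.sum_mul ..
          _ = ∑ _p ∈ D',
              Fintype.card ((Fin k → ZMod 2) →ₗ[ZMod 2] (Fin m → ZMod 2)) := by
              refine Finset.sum_congr rfl (fun p hp => ?_)
              exact fiber_card_mul p.1 ((Finset.mem_filter.1 hp).2) p.2
          _ = D'.card * Fintype.card ((Fin k → ZMod 2) →ₗ[ZMod 2] (Fin m → ZMod 2)) := by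
              rw [Finset.sum_const, smul_eq_mul]
      have h3 : D'.card < 2 ^ m := lt_of_le_of_lt (Finset.card_filter_le _ _) hg
      have h4 : T.card * 2 ^ m
          < 2 ^ m * Fintype.card ((Fin k → ZMod 2) →ₗ[ZMod 2] (Fin m → ZMod 2)) :=
        lt_of_le_of_lt h2 (by exact Nat.mul_lt_mul_of_lt_of_le h3 le_rfl hcardM)
      have h5 : T.card * 2 ^ m
          < Fintype.card ((Fin k → ZMod 2) →ₗ[ZMod 2] (Fin m → ZMod 2)) * 2 ^ m := by
        rwa [mul_comm (2 ^ m)] at h4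
      exact Nat.lt_of_mul_lt_mul_right h5
    obtain ⟨B, hB⟩ : ∃ B : (Fin k → ZMod 2) →ₗ[ZMod 2] (Fin m → ZMod 2), B ∉ T := by
      by_contra hc
      push_neg at hc
      have : (Finset.univ : Finset ((Fin k → ZMod 2) →ₗ[ZMod 2] (Fin m → ZMod 2))) ⊆ T :=
        fun B _ => hc B
      have := Finset.card_le_card this
      rw [Finset.card_univ] at this
      omega
    refine ⟨(LinearMap.id).prod B, fun i => ?_⟩
    have hnot : (v i, B (v i)) ∉ D := fun hmem => hB (by
      simp only [hT, Finset.mem_filter, Finset.mem_univ, true_and]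
      exact ⟨i, hmem⟩)
    simp only [hD, Finset.mem_filter, Finset.mem_univ, true_and, not_not] at hnot
    have hL : ((LinearMap.id).prod B) (v i) = (v i, B (v i)) := rfl
    rw [hL, hnot, hf]
    exact if_pos ⟨i, rfl⟩
  refine ⟨main, fun h hMF => ?_⟩
  by_contra hcon
  push_neg at hcon
  obtain ⟨L, hL⟩ := main h hcon
  exact hMF L hL
end

section
/- Let a ≥ 3 and b ≥ C(a,2) + 2 where C(a,2) = a(a−1)/2. Then there is no matroid homomorphism from the graphic matroid of the complete graph K_b to the graphic matroid of K_a. Concretely: there is no map φ from the edges of K_b to the edges of K_a such that for every set of edges of K_b forming a cycle (even-degree subgraph), the multiset of image edges sums to zero in the edge space of K_a (equivalently, every cycle maps to an even-degree subgraph of K_a). -/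
open Finset

/-- The characteristic vector in `(ZMod 2)^n` of an edge (an element of
`Sym2 (Fin n)`): the standard representation of the graphic matroid. -/
def edgeVec (n : ℕ) : Sym2 (Fin n) → (Fin n → ZMod 2) :=
  Sym2.lift ⟨fun u v w => (if w = u then (1 : ZMod 2) else 0) + (if w = v then 1 else 0),
    by intro u v; funext w; exact add_comm _ _⟩

lemma edgeVec_mk (n : ℕ) (u v w : Fin n) :
    edgeVec n s(u, v) w = (if w = u then (1 : ZMod 2) else 0) + (if w = v then 1 else 0) :=
  rfl

lemma edgeVec_ne_zero {n : ℕ} (e : Sym2 (Fin n)) (he : ¬ e.IsDiag) : edgeVec n e ≠ 0 := by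
  induction e using Sym2.ind with
  | _ u v =>
    rw [Sym2.mk_isDiag_iff] at he
    intro h
    have h2 := congrFun h u
    rw [edgeVec_mk, if_pos rfl, if_neg he] at h2
    simp at h2

/-- If `a ≥ 3` and `b ≥ a(a-1)/2 + 2`, there is no matroid homomorphism from the
graphic matroid of `K_b` to the graphic matroid of `K_a`: no map of edges sends
every zero-sum (even-degree) edge set of `K_b` to a zero-sum edge set of `K_a`. -/
theorem no_hom_complete_graphs {a b : ℕ} (ha : 3 ≤ a) (hb : a * (a - 1) / 2 + 2 ≤ b) :
    ¬ ∃ φ : {e : Sym2 (Fin b) // ¬ e.IsDiag} → {e : Sym2 (Fin a) // ¬ e.IsDiag},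
      ∀ T : Finset {e : Sym2 (Fin b) // ¬ e.IsDiag},
        ∑ e ∈ T, edgeVec b e.val = 0 → ∑ e ∈ T, edgeVec a (φ e).val = 0 := by
  rintro ⟨φ, hφ⟩
  have hb0 : 0 < b := by omega
  -- vertices 1, ..., b-1 of Fin b
  have hval : ∀ i : Fin (b - 1), i.val + 1 < b := fun i => by omega
  set v : Fin (b - 1) → Fin b := fun i => ⟨i.val + 1, hval i⟩ with hv
  have hv0 : ∀ i, v i ≠ (⟨0, hb0⟩ : Fin b) := by
    intro i h
    have := congrArg Fin.val h
    simp [hv] at this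
  have hvinj : Function.Injective v := by
    intro i j h
    have := congrArg Fin.val h
    simp [hv] at this
    exact Fin.ext this
  -- the incident edges
  set E : Fin (b - 1) → {e : Sym2 (Fin b) // ¬ e.IsDiag} :=
    fun i => ⟨s(⟨0, hb0⟩, v i), by simp [Sym2.mk_isDiag_iff]; exact (hv0 i).symm⟩ with hE
  -- pigeonhole
  have hcard : Fintype.card {e : Sym2 (Fin a) // ¬ e.IsDiag} < Fintype.card (Fin (b - 1)) := by
    rw [Sym2.card_subtype_not_diag, Fintype.card_fin, Fintype.card_fin, Nat.choose_two_right]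
    omega
  obtain ⟨i, j, hij, heq⟩ := Fintype.exists_ne_map_eq_of_card_lt (fun i => φ (E i)) hcard
  have hvij : v i ≠ v j := fun h => hij (hvinj h)
  -- the triangle
  set f : {e : Sym2 (Fin b) // ¬ e.IsDiag} :=
    ⟨s(v i, v j), by simp [Sym2.mk_isDiag_iff]; exact hvij⟩ with hf
  have hEij : E i ≠ E j := by
    intro h
    apply hvij
    have : s(⟨0, hb0⟩, v i) = s((⟨0, hb0⟩ : Fin b), v j) := congrArg Subtype.val h
    rw [Sym2.eq_iff] at this
    rcases this with ⟨_, h2⟩ | ⟨h1, _⟩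
    · exact h2
    · exact absurd h1.symm (hv0 j)
  have hfEi : f ≠ E i := by
    intro h
    have : s(v i, v j) = s((⟨0, hb0⟩ : Fin b), v i) := congrArg Subtype.val h
    rw [Sym2.eq_iff] at this
    rcases this with ⟨h1, _⟩ | ⟨_, h2⟩
    · exact hv0 i h1
    · exact hv0 j h2
  have hfEj : f ≠ E j := by
    intro h
    have : s(v i, v j) = s((⟨0, hb0⟩ : Fin b), v j) := congrArg Subtype.val h
    rw [Sym2.eq_iff] at this
    rcases this with ⟨h1, _⟩ | ⟨_, h2⟩
    · exact hv0 i h1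
    · exact hv0 j h2
  set T : Finset {e : Sym2 (Fin b) // ¬ e.IsDiag} := {E i, E j, f} with hT
  have hsum : ∀ {M : Type} [AddCommMonoid M] (g : {e : Sym2 (Fin b) // ¬ e.IsDiag} → M),
      ∑ e ∈ T, g e = g (E i) + g (E j) + g f := by
    intro M _ g
    rw [hT, Finset.sum_insert (by simp [hEij, hfEi.symm]),
      Finset.sum_insert (by simp [hfEj.symm]), Finset.sum_singleton, add_assoc]
  have h2 : ∀ x : ZMod 2, x + x = 0 := by decide
  have htri : ∑ e ∈ T, edgeVec b e.val = 0 := by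
    rw [hsum (fun e => edgeVec b e.val)]
    funext w
    show edgeVec b s(⟨0, hb0⟩, v i) w + edgeVec b s(⟨0, hb0⟩, v j) w
        + edgeVec b s(v i, v j) w = 0
    simp only [edgeVec_mk]
    linear_combination h2 (if w = (⟨0, hb0⟩ : Fin b) then (1 : ZMod 2) else 0)
      + h2 (if w = v i then (1 : ZMod 2) else 0) + h2 (if w = v j then (1 : ZMod 2) else 0)
  have := hφ T htri
  rw [hsum (fun e => edgeVec a (φ e).val), heq] at this
  have hzero : edgeVec a (φ f).val = 0 := by
    funext w
    have hw := congrFun this w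
    simp only [Pi.add_apply, Pi.zero_apply] at hw
    have := h2 (edgeVec a (φ (E j)).val w)
    simp only [Pi.zero_apply]
    linear_combination hw - this
  exact edgeVec_ne_zero _ (φ f).prop hzero
end

section
/- A function f : (ZMod 2)^n → ZMod 2 satisfies: for all x, y, z, w with x + y + z + w = 0, not (f(x) = 1 ∧ f(y) = 1 ∧ f(z) = 1 ∧ f(w) = 0), if and only if f is identically 0 or f⁻¹(1) is an affine subspace of (ZMod 2)^n. -/
open Finset

lemma zmod2_cases (a : ZMod 2) : a = 0 ∨ a = 1 := (show ∀ a : ZMod 2, a = 0 ∨ a = 1 by decide) a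

lemma vec_add_self {n : ℕ} (x : Fin n → ZMod 2) : x + x = 0 := by
  funext i
  have : ∀ a : ZMod 2, a + a = 0 := by decide
  exact this (x i)

/-- `(C_4, 1110)`-freeness characterization: `f` avoids the pattern `1110` on
zero-sum 4-tuples iff `f` is identically `0` or `f⁻¹(1)` is an affine subspace. -/
theorem c4_1110_free_iff {n : ℕ} (f : (Fin n → ZMod 2) → ZMod 2) :
    (∀ x y z w : Fin n → ZMod 2, x + y + z + w = 0 →
        ¬ (f x = 1 ∧ f y = 1 ∧ f z = 1 ∧ f w = 0)) ↔
      ((∀ x, f x = 0) ∨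
        ∃ (v : Fin n → ZMod 2) (W : Submodule (ZMod 2) (Fin n → ZMod 2)),
          {x | f x = 1} = {x | ∃ u ∈ W, x = v + u}) := by
  constructor
  · intro hfree
    by_cases h0 : ∀ x, f x = 0
    · exact Or.inl h0
    · right
      push_neg at h0
      obtain ⟨v, hv⟩ := h0
      have hv1 : f v = 1 := (zmod2_cases (f v)).resolve_left hv
      refine ⟨v, ⟨⟨⟨{u | f (v + u) = 1}, ?_⟩, ?_⟩, ?_⟩, ?_⟩
      · -- add_mem
        intro a b ha hb
        simp only [Set.mem_setOf_eq] at *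
        have hsum : (v + a) + (v + b) + v + (v + (a + b)) = 0 := by
          have h1 := vec_add_self v
          have h2 : (v + a) + (v + b) + v + (v + (a + b))
              = (v + v) + (v + v) + ((a + a) + (b + b)) := by ring
          rw [h2, h1, vec_add_self a, vec_add_self b]
          simp
        have := hfree _ _ _ _ hsum
        rcases zmod2_cases (f (v + (a + b))) with h | h
        · exact absurd ⟨ha, hb, hv1, h⟩ this
        · exact h
      · -- zero_mem
        simpa using hv1
      · -- smul_mem
        intro c u hu
        rcases zmod2_cases c with rfl | rfl
        · simpa using hv1
        · simpa using hu
      · ext x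
        simp only [Set.mem_setOf_eq]
        constructor
        · intro hx
          refine ⟨v + x, ?_, ?_⟩
          · show f (v + (v + x)) = 1
            rwa [← add_assoc, vec_add_self v, zero_add]
          · rw [← add_assoc, vec_add_self v, zero_add]
        · rintro ⟨u, hu, rfl⟩
          exact hu
  · rintro (h0 | ⟨v, W, hW⟩)
    · intro x y z w _ ⟨hx, _⟩
      rw [h0 x] at hx
      exact absurd hx (by decide)
    · intro x y z w hsum ⟨hx, hy, hz, hw⟩
      have hx' : x ∈ {x | ∃ u ∈ W, x = v + u} := hW ▸ hx
      have hy' : y ∈ {x | ∃ u ∈ W, x = v + u} := hW ▸ hy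
      have hz' : z ∈ {x | ∃ u ∈ W, x = v + u} := hW ▸ hz
      obtain ⟨a, ha, rfl⟩ := hx'
      obtain ⟨b, hb, rfl⟩ := hy'
      obtain ⟨c, hc, rfl⟩ := hz'
      have hwv : w = v + (a + b + c) := by
        have h1 : w = w + ((v + a) + (v + b) + (v + c) + w) := by
          rw [hsum]; simp
        have h2 : w + ((v + a) + (v + b) + (v + c) + w)
            = (w + w) + (v + v) + v + (a + b + c) := by ring
        rw [h1, h2, vec_add_self w, vec_add_self v]
        simp
      have : w ∈ {x | f x = 1} := by
        rw [hW]
        exact ⟨a + b + c, W.add_mem (W.add_mem ha hb) hc, hwv⟩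
      rw [Set.mem_setOf_eq, hw] at this
      exact absurd this (by decide)
end

section
/- A function f : (ZMod 2)^n → ZMod 2 is (C_6, 000111)-free (no zero-sum 6-tuple x_1,...,x_6 with f equal to 0 on the first three and 1 on the last three) if and only if f is an affine function, i.e., f(x) = ⟨a,x⟩ + c for some a ∈ (ZMod 2)^n, c ∈ ZMod 2. -/
open Finset

/-- `(C_6, 000111)`-freeness characterization: `f` avoids the ordered pattern
`000111` on zero-sum 6-tuples iff `f` is an affine function. -/
theorem c6_000111_free_iff_affine {n : ℕ} (f : (Fin n → ZMod 2) → ZMod 2) :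
    (¬ ∃ x : Fin 6 → (Fin n → ZMod 2), ∑ i, x i = 0 ∧
        (∀ i : Fin 6, (i : ℕ) < 3 → f (x i) = 0) ∧
        (∀ i : Fin 6, 3 ≤ (i : ℕ) → f (x i) = 1)) ↔
      ∃ (a : Fin n → ZMod 2) (c : ZMod 2), ∀ x, f x = (∑ j, a j * x j) + c := by
  have two_cases : ∀ v : ZMod 2, v = 0 ∨ v = 1 := by decide
  have ne1 : ∀ v : ZMod 2, ¬ v = 1 → v = 0 := by decide
  have ne0 : ∀ v : ZMod 2, ¬ v = 0 → v = 1 := by decide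
  have hvv : ∀ v : ZMod 2, v + v = 0 := by decide
  constructor
  · intro hfree
    by_cases h1 : ∃ t, f t = 1
    case neg =>
      push_neg at h1
      exact ⟨0, 0, fun x => by simp [ne1 _ (h1 x)]⟩
    by_cases h0 : ∃ t, f t = 0
    case neg =>
      push_neg at h0
      exact ⟨0, 1, fun x => by simp [ne0 _ (h0 x)]⟩
    obtain ⟨t0, ht0⟩ := h0
    obtain ⟨t1, ht1⟩ := h1
    -- rearrangement helpers
    have key6 : ∀ t z w u : Fin n → ZMod 2, t + t + (z + w + u) + z + w + u = 0 := by
      intro t z w u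
      funext j
      have : ∀ a b c d : ZMod 2, a + a + (b + c + d) + b + c + d = 0 := by decide
      exact this (t j) (z j) (w j) (u j)
    have r1 : ∀ x y z : Fin n → ZMod 2, x + y + (x + y + z) = z := by
      intro x y z
      funext j
      have : ∀ a b c : ZMod 2, a + b + (a + b + c) = c := by decide
      exact this (x j) (y j) (z j)
    have r2 : ∀ x y z : Fin n → ZMod 2, x + z + (x + y + z) = y := by
      intro x y z
      funext j
      have : ∀ a b c : ZMod 2, a + c + (a + b + c) = b := by decide
      exact this (x j) (y j) (z j)
    have r3 : ∀ x y z : Fin n → ZMod 2, y + z + (x + y + z) = x := by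
      intro x y z
      funext j
      have : ∀ a b c : ZMod 2, b + c + (a + b + c) = a := by decide
      exact this (x j) (y j) (z j)
    -- closure of the 1-level set
    have cl1 : ∀ z w u, f z = 1 → f w = 1 → f u = 1 → f (z + w + u) = 1 := by
      intro z w u hz hw hu
      by_contra h
      have h' := ne1 _ h
      refine hfree ⟨![t0, t0, z + w + u, z, w, u], ?_, ?_, ?_⟩
      · rw [Fin.sum_univ_six]
        simpa using key6 t0 z w u
      · intro i hi
        fin_cases i
        · exact ht0
        · exact ht0
        · exact h'
        · exact absurd hi (by decide)
        · exact absurd hi (by decide)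
        · exact absurd hi (by decide)
      · intro i hi
        fin_cases i
        · exact absurd hi (by decide)
        · exact absurd hi (by decide)
        · exact absurd hi (by decide)
        · exact hz
        · exact hw
        · exact hu
    -- closure of the 0-level set
    have cl0 : ∀ z w u, f z = 0 → f w = 0 → f u = 0 → f (z + w + u) = 0 := by
      intro z w u hz hw hu
      by_contra h
      have h' := ne0 _ h
      refine hfree ⟨![z, w, u, t1, t1, z + w + u], ?_, ?_, ?_⟩
      · rw [Fin.sum_univ_six]
        funext j
        have : ∀ a b c d : ZMod 2, b + c + d + a + a + (b + c + d) = 0 := by decide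
        simpa using this (t1 j) (z j) (w j) (u j)
      · intro i hi
        fin_cases i
        · exact hz
        · exact hw
        · exact hu
        · exact absurd hi (by decide)
        · exact absurd hi (by decide)
        · exact absurd hi (by decide)
      · intro i hi
        fin_cases i
        · exact absurd hi (by decide)
        · exact absurd hi (by decide)
        · exact absurd hi (by decide)
        · exact ht1
        · exact ht1
        · exact h'
    -- f is "affine-additive"
    have key3 : ∀ x y z, f (x + y + z) = f x + f y + f z := by
      intro x y z
      rcases two_cases (f x) with hx | hx <;> rcases two_cases (f y) with hy | hy <;>
        rcases two_cases (f z) with hz | hz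
      · rw [cl0 x y z hx hy hz, hx, hy, hz]; decide
      · rw [hx, hy, hz]
        by_contra h
        have h' : f (x + y + z) = 0 := ne1 _ (by simpa using h)
        have := cl0 x y (x + y + z) hx hy h'
        rw [r1] at this
        simp [hz] at this
      · rw [hx, hy, hz]
        by_contra h
        have h' : f (x + y + z) = 0 := ne1 _ (by simpa using h)
        have := cl0 x z (x + y + z) hx hz h'
        rw [r2] at this
        simp [hy] at this
      · rw [hx, hy, hz]
        by_contra h
        have h' : f (x + y + z) = 1 := ne0 _ (by simpa [hvv] using h)
        have := cl1 y z (x + y + z) hy hz h'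
        rw [r3] at this
        simp [hx] at this
      · rw [hx, hy, hz]
        by_contra h
        have h' : f (x + y + z) = 0 := ne1 _ (by simpa using h)
        have := cl0 y z (x + y + z) hy hz h'
        rw [r3] at this
        simp [hx] at this
      · rw [hx, hy, hz]
        by_contra h
        have h' : f (x + y + z) = 1 := ne0 _ (by simpa [hvv] using h)
        have := cl1 x z (x + y + z) hx hz h'
        rw [r2] at this
        simp [hy] at this
      · rw [hx, hy, hz]
        by_contra h
        have h' : f (x + y + z) = 1 := ne0 _ (by simpa [hvv] using h)
        have := cl1 x y (x + y + z) hx hy h'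
        rw [r1] at this
        simp [hz] at this
      · rw [cl1 x y z hx hy hz, hx, hy, hz]; decide
    have add : ∀ x y, f (x + y) = f x + f y + f 0 := by
      intro x y
      have := key3 x y 0
      simpa using this
    -- build the linear part
    let G : (Fin n → ZMod 2) →+ ZMod 2 :=
      AddMonoidHom.mk' (fun x => f x + f 0) (fun x y => by show f (x + y) + f 0 = f x + f 0 + (f y + f 0); rw [add x y]; ring)
    have hG : ∀ z, G z = f z + f 0 := fun z => rfl
    refine ⟨fun j => f (fun k => if j = k then 1 else 0) + f 0, f 0, fun x => ?_⟩
    have h1 : G x = ∑ i, x i * G (fun j => if i = j then 1 else 0) := by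
      conv_lhs => rw [pi_eq_sum_univ x]
      rw [map_sum]
      refine Finset.sum_congr rfl fun i _ => ?_
      rcases two_cases (x i) with h | h <;> simp [h]
    have hfx : f x = G x + f 0 := by
      rw [hG, add_assoc, hvv, add_zero]
    rw [hfx, h1]
    congr 1
    refine Finset.sum_congr rfl fun i _ => ?_
    rw [hG]
    ring
  · rintro ⟨a, c, hf⟩ ⟨x, hsum, hp0, hp1⟩
    have hs : ∑ i : Fin 6, f (x i) = 1 := by
      rw [Fin.sum_univ_six, hp0 0 (by decide), hp0 1 (by decide), hp0 2 (by decide),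
          hp1 3 (by decide), hp1 4 (by decide), hp1 5 (by decide)]
      decide
    have hz : ∑ i : Fin 6, f (x i) = 0 := by
      simp only [hf]
      rw [Finset.sum_add_distrib]
      have hcomm : ∑ i : Fin 6, ∑ j, a j * x i j = ∑ j, a j * (∑ i : Fin 6, x i j) := by
        rw [Finset.sum_comm]
        simp [Finset.mul_sum]
      have hc : ∀ j, ∑ i : Fin 6, x i j = 0 := fun j => by
        have := congrFun hsum j
        simpa using this
      have h6 : ∀ c : ZMod 2, (6 : ℕ) • c = 0 := by decide
      rw [hcomm]
      simp [hc, Finset.sum_const, h6]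
    rw [hs] at hz
    exact one_ne_zero hz
end
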